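/- Let N ≥ 1, let u ∈ ℝ^N be a nonzero vector, let F : ℝ^N_{++} → ℝ^N_{++} be continuously differentiable, assume that F scales with exponent u, that F connects all variables, and that the monotonicity behavior of F is consistent with u, and set G := clog ∘ F ∘ cexp. Then for each z ∈ ℝ^N the eigenspace of the Jacobian matrix DG(z) for the eigenvalue 1 is one-dimensional and is spanned by u. -/

import Mathlib

open Filter
set_option maxHeartbeats 1000000

/-- The positive orthant `ℝ^N_{++}`: vectors all of whose entries are strictly positive. -/
def PosOrth (N : ℕ) : Set (Fin N → ℝ) := {x | ∀ i, 0 < x i}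

/-- The Jacobian matrix of `F` at `x`: entry `(j, k)` is `∂F_j(x)/∂x_k`. -/
noncomputable def Jac {N : ℕ} (F : (Fin N → ℝ) → (Fin N → ℝ)) (x : Fin N → ℝ) :
    Matrix (Fin N) (Fin N) ℝ :=
  Matrix.of fun j k => fderiv ℝ F x (Pi.single k 1) j

/-- A matrix is irreducible if the directed graph on `Fin N` with an edge from `k` to `j`
whenever `M j k ≠ 0` is strongly connected. -/
def MatIrred {N : ℕ} (M : Matrix (Fin N) (Fin N) ℝ) : Prop :=
  ∀ a b : Fin N, Relation.TransGen (fun k j => M j k ≠ 0) a b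

/-- `pscale c u x = c^u x`, i.e. the vector with entries `c ^ (u i) * x i`. -/
noncomputable def pscale {N : ℕ} (c : ℝ) (u x : Fin N → ℝ) : Fin N → ℝ :=
  fun i => c ^ u i * x i

/-- The monotonicity behavior of `F` is consistent with `u`: there is a partition of the
index set into `ζ_+` (where `ζ = true`) and `ζ_-` (where `ζ = false`) such that `u` is
nonnegative on `ζ_+`, nonpositive on `ζ_-`, and on the positive orthant all partial
derivatives `∂F_j/∂x_k` are nonnegative when `j, k` lie in the same set of the partition
and nonpositive otherwise. -/
def MonoConsistent {N : ℕ} (F : (Fin N → ℝ) → (Fin N → ℝ)) (u : Fin N → ℝ) : Prop :=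
  ∃ ζ : Fin N → Bool,
    (∀ j, ζ j = true → 0 ≤ u j) ∧ (∀ j, ζ j = false → u j ≤ 0) ∧
    ∀ x ∈ PosOrth N, ∀ j k : Fin N,
      (ζ j = ζ k → 0 ≤ Jac F x j k) ∧ (ζ j ≠ ζ k → Jac F x j k ≤ 0)

/-- Componentwise natural logarithm `ℝ^N_{++} → ℝ^N`. -/
noncomputable def clog {N : ℕ} (x : Fin N → ℝ) : Fin N → ℝ := fun i => Real.log (x i)

/-- Componentwise exponential `ℝ^N → ℝ^N_{++}`. -/
noncomputable def cexp {N : ℕ} (z : Fin N → ℝ) : Fin N → ℝ := fun i => Real.exp (z i)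

/-- If `u ≠ 0`, `F : ℝ^N_{++} → ℝ^N_{++}` is continuously differentiable, scales with
exponent `u`, connects all variables, and its monotonicity behavior is consistent with
`u`, then for each `z ∈ ℝ^N` the eigenspace of the Jacobian `DG(z)` of
`G := clog ∘ F ∘ cexp` for the eigenvalue `1` is one-dimensional and spanned by `u`. -/
lemma zero_prop {N : ℕ} (B : Matrix (Fin N) (Fin N) ℝ)
    (hB : ∀ j k, 0 ≤ B j k) (y : Fin N → ℝ) (hy : ∀ i, 0 ≤ y i)
    (hyB : ∀ j, B.mulVec y j ≤ y j) :
    ∀ a b : Fin N, Relation.TransGen (fun k j => B j k ≠ 0) a b → y b = 0 → y a = 0 := by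
  have step : ∀ a b : Fin N, B b a ≠ 0 → y b = 0 → y a = 0 := by
    intro a b hedge hb
    have hsum : ∑ k, B b k * y k = 0 := by
      have h1 : B.mulVec y b ≤ 0 := hb ▸ hyB b
      have h2 : 0 ≤ B.mulVec y b := by
        simp only [Matrix.mulVec, dotProduct]
        exact Finset.sum_nonneg fun k _ => mul_nonneg (hB b k) (hy k)
      have : B.mulVec y b = 0 := le_antisymm h1 h2
      simpa [Matrix.mulVec, dotProduct] using this
    have := (Finset.sum_eq_zero_iff_of_nonneg
      (fun k _ => mul_nonneg (hB b k) (hy k))).mp hsum a (Finset.mem_univ a)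
    rcases mul_eq_zero.mp this with h | h
    · exact absurd h hedge
    · exact h
  intro a b hpath
  induction hpath with
  | single h => exact step _ _ h
  | tail _ h ih => exact fun hc => ih (step _ _ h hc)

lemma real_eig {N : ℕ} (hN : 1 ≤ N) (B : Matrix (Fin N) (Fin N) ℝ)
    (hB : ∀ j k, 0 ≤ B j k)
    (hirr : ∀ a b : Fin N, Relation.TransGen (fun k j => B j k ≠ 0) a b)
    (v : Fin N → ℝ) (hv : ∀ i, 0 ≤ v i) (hv0 : v ≠ 0)
    (hBv : B.mulVec v = v) :
    (∀ i, 0 < v i) ∧ ∀ x : Fin N → ℝ, B.mulVec x = x → ∃ t : ℝ, x = t • v := by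
  have hne : (Finset.univ : Finset (Fin N)).Nonempty := by
    have : Nonempty (Fin N) := ⟨⟨0, hN⟩⟩
    exact Finset.univ_nonempty
  have hvpos : ∀ i, 0 < v i := by
    by_contra hcon
    push_neg at hcon
    obtain ⟨k, hk⟩ := hcon
    have hk0 : v k = 0 := le_antisymm hk (hv k)
    have hall : ∀ i, v i = 0 := fun i =>
      zero_prop B hB v hv (fun j => le_of_eq (congrFun hBv j)) i k (hirr i k) hk0
    exact hv0 (funext hall)
  refine ⟨hvpos, fun x hx => ?_⟩
  set t := Finset.univ.sup' hne (fun i => x i / v i) with ht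
  have hle : ∀ i, x i ≤ t * v i := by
    intro i
    have := Finset.le_sup' (fun i => x i / v i) (Finset.mem_univ i)
    exact (div_le_iff₀ (hvpos i)).mp this
  set y : Fin N → ℝ := fun i => t * v i - x i with hy
  have hynn : ∀ i, 0 ≤ y i := fun i => sub_nonneg.mpr (hle i)
  have hyB : ∀ j, B.mulVec y j ≤ y j := by
    intro j
    have : B.mulVec y = fun j => t * v j - x j := by
      have : y = t • v - x := by funext i; simp [hy, smul_eq_mul]
      rw [this, Matrix.mulVec_sub, Matrix.mulVec_smul, hBv, hx]
      funext i; simp [smul_eq_mul]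
    rw [this]
  obtain ⟨i₀, -, hi₀⟩ := Finset.exists_mem_eq_sup' hne (fun i => x i / v i)
  have hyi₀ : y i₀ = 0 := by
    show t * v i₀ - x i₀ = 0
    rw [ht, hi₀, div_mul_cancel₀ _ (hvpos i₀).ne', sub_self]
  refine ⟨t, funext fun i => ?_⟩
  have h0 := zero_prop B hB y hynn hyB i i₀ (hirr i i₀) hyi₀
  have h1 : y i = t * v i - x i := by simp [hy]
  have : x i = t * v i := by rw [h0] at h1; linarith
  simpa [smul_eq_mul] using this

theorem eigenspace_of_log_jacobian
    {N : ℕ} (hN : 1 ≤ N) (u : Fin N → ℝ) (hu : u ≠ 0)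
    (F : (Fin N → ℝ) → (Fin N → ℝ))
    (hmap : ∀ x ∈ PosOrth N, F x ∈ PosOrth N)
    (hC1 : ContDiffOn ℝ 1 F (PosOrth N))
    (hscale : ∀ x ∈ PosOrth N, ∀ c : ℝ, 0 < c → F (pscale c u x) = pscale c u (F x))
    (hconn : ∀ x ∈ PosOrth N, MatIrred (Matrix.of fun j k => |Jac F x j k|))
    (hmono : MonoConsistent F u)
    (G : (Fin N → ℝ) → (Fin N → ℝ)) (hG : G = clog ∘ F ∘ cexp) :
    ∀ z : Fin N → ℝ,
      Module.End.eigenspace (Matrix.toLin' ((Jac G z).map Complex.ofReal)) 1 =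
        Submodule.span ℂ {fun i => (u i : ℂ)} ∧
      Module.finrank ℂ
        (Module.End.eigenspace (Matrix.toLin' ((Jac G z).map Complex.ofReal)) 1) = 1 := by
  classical
  obtain ⟨ζ, hζp, hζm, hζsign⟩ := hmono
  intro z
  set x : Fin N → ℝ := cexp z with hxdef
  have hx : x ∈ PosOrth N := fun i => Real.exp_pos _
  have hFx : F x ∈ PosOrth N := hmap x hx
  have hopen : IsOpen (PosOrth N) := by
    have h : PosOrth N = ⋂ i, (fun y : Fin N → ℝ => y i) ⁻¹' Set.Ioi 0 := by
      ext y; simp [PosOrth, Set.mem_iInter]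
    rw [h]
    exact isOpen_iInter_of_finite fun i => isOpen_Ioi.preimage (continuous_apply i)
  have hFd : DifferentiableAt ℝ F x :=
    (hC1.differentiableOn one_ne_zero).differentiableAt (hopen.mem_nhds hx)
  set L : (Fin N → ℝ) →L[ℝ] (Fin N → ℝ) := fderiv ℝ F x with hLdef
  have hFL : HasFDerivAt F L x := hFd.hasFDerivAt
  set Dexp : (Fin N → ℝ) →L[ℝ] (Fin N → ℝ) :=
    ContinuousLinearMap.pi (fun i => Real.exp (z i) • ContinuousLinearMap.proj i) with hDexp
  have hexp : HasFDerivAt (cexp (N := N)) Dexp z :=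
    hasFDerivAt_pi.mpr fun i =>
      (Real.hasDerivAt_exp (z i)).comp_hasFDerivAt z (hasFDerivAt_apply i z)
  set Dlog : (Fin N → ℝ) →L[ℝ] (Fin N → ℝ) :=
    ContinuousLinearMap.pi (fun i => (F x i)⁻¹ • ContinuousLinearMap.proj i) with hDlog
  have hlog : HasFDerivAt (clog (N := N)) Dlog (F x) :=
    hasFDerivAt_pi.mpr fun i =>
      (Real.hasDerivAt_log (hFx i).ne').comp_hasFDerivAt (F x) (hasFDerivAt_apply i (F x))
  have hGz : HasFDerivAt G (Dlog.comp (L.comp Dexp)) z := by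
    rw [hG]
    exact hlog.comp z (hFL.comp z hexp)
  -- Entries of the Jacobian of G
  have hentry : ∀ j k, Jac G z j k = (F x j)⁻¹ * (x k * Jac F x j k) := by
    intro j k
    have h1 : fderiv ℝ G z = Dlog.comp (L.comp Dexp) := hGz.fderiv
    have h2 : Dexp (Pi.single k 1) = x k • (Pi.single k (1 : ℝ) : Fin N → ℝ) := by
      funext i
      by_cases h : i = k
      · subst h
        simp [hDexp, ContinuousLinearMap.pi_apply, hxdef, cexp]
      · simp [hDexp, ContinuousLinearMap.pi_apply, Pi.single_eq_of_ne h]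
    show fderiv ℝ G z (Pi.single k 1) j = _
    rw [h1]
    simp only [ContinuousLinearMap.comp_apply, h2, map_smul]
    simp only [hDlog, ContinuousLinearMap.pi_apply, ContinuousLinearMap.smul_apply,
      ContinuousLinearMap.proj_apply, Pi.smul_apply, smul_eq_mul]
    show x k * ((F x j)⁻¹ * L (Pi.single k 1) j) = (F x j)⁻¹ * (x k * Jac F x j k)
    rw [show Jac F x j k = L (Pi.single k 1) j from by simp [Jac, hLdef]]
    ring
  have hLapply : ∀ (y : Fin N → ℝ) (j : Fin N), L y j = ∑ k, y k * Jac F x j k := by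
    intro y j
    have hy0 : y = ∑ k, y k • (Pi.single k (1 : ℝ) : Fin N → ℝ) := by
      conv_lhs => rw [pi_eq_sum_univ y]
      refine Finset.sum_congr rfl fun k _ => ?_
      congr 1
      funext j'
      simp [Pi.single_apply, eq_comm]
    conv_lhs => rw [hy0]
    rw [map_sum]
    rw [Finset.sum_apply]
    refine Finset.sum_congr rfl fun k _ => ?_
    rw [map_smul]
    simp [Jac, hLdef, smul_eq_mul]
  -- Scaling gives the eigenvector equation
  have hone : pscale 1 u x = x := by
    funext i; simp [pscale, Real.one_rpow]
  have hcurve : ∀ w : Fin N → ℝ,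
      HasDerivAt (fun c : ℝ => pscale c u w) (fun k => u k * w k) 1 := by
    intro w
    rw [hasDerivAt_pi]
    intro k
    have h := (Real.hasDerivAt_rpow_const (x := 1) (p := u k) (Or.inl one_ne_zero)).mul_const (w k)
    simpa [pscale, Real.one_rpow] using h
  have h1 : HasDerivAt (fun c : ℝ => F (pscale c u x)) (L (fun k => u k * x k)) 1 := by
    have hFL' : HasFDerivAt F L (pscale 1 u x) := by rw [hone]; exact hFL
    exact hFL'.comp_hasDerivAt 1 (hcurve x)
  have heq : (fun c : ℝ => pscale c u (F x)) =ᶠ[nhds 1] fun c : ℝ => F (pscale c u x) := by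
    filter_upwards [eventually_gt_nhds zero_lt_one] with c hc
    exact (hscale x hx c hc).symm
  have h2 : HasDerivAt (fun c : ℝ => pscale c u (F x)) (L (fun k => u k * x k)) 1 :=
    h1.congr_of_eventuallyEq heq
  have hLux : L (fun k => u k * x k) = fun j => u j * F x j := ((hcurve (F x)).unique h2).symm
  have hAu : (Jac G z).mulVec u = u := by
    funext j
    have hstep : (Jac G z).mulVec u j = (F x j)⁻¹ * ∑ k, (u k * x k) * Jac F x j k := by
      simp only [Matrix.mulVec, dotProduct, hentry, Finset.mul_sum]
      refine Finset.sum_congr rfl fun k _ => ?_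
      ring
    rw [hstep, ← hLapply, hLux]
    show (F x j)⁻¹ * (u j * F x j) = u j
    rw [mul_comm, mul_assoc, mul_inv_cancel₀ (hFx j).ne', mul_one]
  -- Sign structure
  set ε : Fin N → ℝ := fun j => if ζ j then 1 else -1 with hε
  have hεsq : ∀ j, ε j * ε j = 1 := by
    intro j; by_cases h : ζ j <;> simp [hε, h]
  have hεne : ∀ j, ε j ≠ 0 := by
    intro j; by_cases h : ζ j <;> simp [hε, h]
  set A : Matrix (Fin N) (Fin N) ℝ := Jac G z with hA
  set B : Matrix (Fin N) (Fin N) ℝ := Matrix.of fun j k => ε j * A j k * ε k with hB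
  have hp : ∀ j k : Fin N, 0 < (F x j)⁻¹ * x k :=
    fun j k => mul_pos (inv_pos.mpr (hFx j)) (hx k)
  have hBentry : ∀ j k, B j k = ((F x j)⁻¹ * x k) * (ε j * Jac F x j k * ε k) := by
    intro j k
    show ε j * A j k * ε k = _
    rw [hentry j k]
    ring
  have hBnn : ∀ j k, 0 ≤ B j k := by
    intro j k
    rw [hBentry]
    refine mul_nonneg (hp j k).le ?_
    by_cases h : ζ j = ζ k
    · have hJ := (hζsign x hx j k).1 h
      have hjk : ε j = ε k := by simp only [hε]; rw [h]
      rw [hjk]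
      have h2 : ε k * Jac F x j k * ε k = Jac F x j k := by
        linear_combination Jac F x j k * hεsq k
      rw [h2]; exact hJ
    · have hJ := (hζsign x hx j k).2 h
      have hjk : ε j * ε k = -1 := by
        rcases Bool.eq_false_or_eq_true (ζ j) with hj | hj <;>
          rcases Bool.eq_false_or_eq_true (ζ k) with hk | hk
        · exact absurd (hj.trans hk.symm) h
        · simp only [hε, hj, hk]; norm_num
        · simp only [hε, hj, hk]; norm_num
        · exact absurd (hj.trans hk.symm) h
      have h2 : ε j * Jac F x j k * ε k = -Jac F x j k := by
        linear_combination Jac F x j k * hjk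
      rw [h2]; linarith
  have hBirr : ∀ a b : Fin N, Relation.TransGen (fun k j => B j k ≠ 0) a b := by
    intro a b
    refine Relation.TransGen.mono ?_ _ _ (hconn x hx a b)
    intro k j h
    have hJ : Jac F x j k ≠ 0 := by simpa using h
    show B j k ≠ 0
    rw [hBentry j k]
    exact mul_ne_zero (hp j k).ne'
      (mul_ne_zero (mul_ne_zero (hεne j) hJ) (hεne k))
  set v : Fin N → ℝ := fun j => ε j * u j with hv
  have hvnn : ∀ i, 0 ≤ v i := by
    intro i
    rcases Bool.eq_false_or_eq_true (ζ i) with h | h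
    · have hui := hζp i h
      have hei : ε i = 1 := by simp [hε, h]
      show 0 ≤ ε i * u i
      rw [hei]; linarith
    · have hui := hζm i h
      have hei : ε i = -1 := by simp [hε, h]
      show 0 ≤ ε i * u i
      rw [hei]; linarith
  have hvne : v ≠ 0 := by
    intro hc
    apply hu
    funext i
    have h0 : v i = 0 := congrFun hc i
    rcases mul_eq_zero.mp h0 with h | h
    · exact absurd h (hεne i)
    · exact h
  have hmulB : ∀ (y : Fin N → ℝ), (Jac G z).mulVec y = y →
      B.mulVec (fun j => ε j * y j) = fun j => ε j * y j := by
    intro y hy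
    funext j
    show ∑ k, (ε j * A j k * ε k) * (ε k * y k) = ε j * y j
    have hterm : ∀ k, (ε j * A j k * ε k) * (ε k * y k) = ε j * (A j k * y k) := by
      intro k
      linear_combination (ε j * A j k * y k) * hεsq k
    calc ∑ k, (ε j * A j k * ε k) * (ε k * y k) = ∑ k, ε j * (A j k * y k) :=
          Finset.sum_congr rfl fun k _ => hterm k
      _ = ε j * ∑ k, A j k * y k := by rw [Finset.mul_sum]
      _ = ε j * (Jac G z).mulVec y j := rfl
      _ = ε j * y j := by rw [hy]
  have hBv : B.mulVec v = v := hmulB u hAu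
  obtain ⟨hvpos, hspan⟩ := real_eig hN B hBnn hBirr v hvnn hvne hBv
  have hAeig : ∀ y : Fin N → ℝ, (Jac G z).mulVec y = y → ∃ t : ℝ, y = t • u := by
    intro y hy
    obtain ⟨t, ht⟩ := hspan _ (hmulB y hy)
    refine ⟨t, funext fun i => ?_⟩
    have h1 : ε i * y i = t * (ε i * u i) := by simpa [smul_eq_mul, hv] using congrFun ht i
    have h1' : ε i * y i = ε i * (t * u i) := by rw [h1]; ring
    have := mul_left_cancel₀ (hεne i) h1'
    simpa [smul_eq_mul] using this
  -- Complex part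
  have huC : (fun i => (u i : ℂ)) ≠ 0 := by
    intro hc
    apply hu
    funext i
    have h0 : (u i : ℂ) = 0 := by simpa using congrFun hc i
    exact_mod_cast h0
  have hMuC : ((Jac G z).map Complex.ofReal).mulVec (fun i => (u i : ℂ)) =
      fun i => (u i : ℂ) := by
    funext j
    show ∑ k, ((Jac G z j k : ℝ) : ℂ) * (u k : ℂ) = (u j : ℂ)
    have h := congrFun hAu j
    calc ∑ k, ((Jac G z j k : ℝ) : ℂ) * (u k : ℂ)
        = ((∑ k, Jac G z j k * u k : ℝ) : ℂ) := by push_cast; rfl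
      _ = ((u j : ℝ) : ℂ) := by
          norm_cast
  have hkey : ∀ w : Fin N → ℂ, ((Jac G z).map Complex.ofReal).mulVec w = w →
      ∃ t : ℂ, w = t • (fun i => (u i : ℂ)) := by
    intro w hw
    have hre : (Jac G z).mulVec (fun i => (w i).re) = fun i => (w i).re := by
      funext j
      have h := congrArg Complex.re (congrFun hw j)
      have h2 : (((Jac G z).map Complex.ofReal).mulVec w j).re
          = ∑ k, Jac G z j k * (w k).re := by
        simp [Matrix.mulVec, dotProduct, Complex.re_sum, Complex.mul_re]
      rw [h2] at h
      exact h
    have him : (Jac G z).mulVec (fun i => (w i).im) = fun i => (w i).im := by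
      funext j
      have h := congrArg Complex.im (congrFun hw j)
      have h2 : (((Jac G z).map Complex.ofReal).mulVec w j).im
          = ∑ k, Jac G z j k * (w k).im := by
        simp [Matrix.mulVec, dotProduct, Complex.im_sum, Complex.mul_im]
      rw [h2] at h
      exact h
    obtain ⟨s, hs⟩ := hAeig _ hre
    obtain ⟨t2, ht2⟩ := hAeig _ him
    refine ⟨(s : ℂ) + (t2 : ℂ) * Complex.I, funext fun i => ?_⟩
    have h1 : (w i).re = s * u i := by simpa [smul_eq_mul] using congrFun hs i
    have h2 : (w i).im = t2 * u i := by simpa [smul_eq_mul] using congrFun ht2 i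
    have h3 := Complex.re_add_im (w i)
    rw [← h3, h1, h2]
    simp [Pi.smul_apply, smul_eq_mul]
    ring
  have hmain : Module.End.eigenspace (Matrix.toLin' ((Jac G z).map Complex.ofReal)) 1 =
      Submodule.span ℂ {fun i => (u i : ℂ)} := by
    ext w
    rw [Module.End.mem_eigenspace_iff, Matrix.toLin'_apply, one_smul,
      Submodule.mem_span_singleton]
    constructor
    · intro hw
      obtain ⟨t, ht⟩ := hkey w hw
      exact ⟨t, ht.symm⟩
    · rintro ⟨a, rfl⟩
      rw [Matrix.mulVec_smul, hMuC]
  exact ⟨hmain, by rw [hmain]; exact finrank_span_singleton huC⟩
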